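/- Let G be a graph, C a longest cycle in G with c vertices, and u a vertex not on C adjacent to a vertex vc of C. Let P = vc, u be the path of length 1, and suppose (C, P) is a best lollipop and all neighbors of u lie in V(C) ∪ {u}. Then the degree of u satisfies d(u) ≤ ⌈(c-1)/2⌉. -/

import Mathlib

open SimpleGraph

/-- `P'` is aligned with `P` (both starting at `x`): shared vertices appear in the
same relative order. -/
def Aligned {V : Type*} [DecidableEq V] {G : SimpleGraph V} {x a b : V}
    (P : G.Walk x a) (P' : G.Walk x b) : Prop :=
  ∀ u v : V, u ∈ P.support → v ∈ P.support → u ∈ P'.support → v ∈ P'.support →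
    P.support.idxOf u < P.support.idxOf v →
    P'.support.idxOf u < P'.support.idxOf v

/-- Two paths with common origin `x` are internally disjoint: every common vertex is a
common endpoint. -/
def IntDisjoint {V : Type*} {G : SimpleGraph V} {x a b : V}
    (P : G.Walk x a) (Q : G.Walk x b) : Prop :=
  ∀ v : V, v ∈ P.support → v ∈ Q.support → (v = x ∨ v = a) ∧ (v = x ∨ v = b)

/-- 2-connected: at least 3 vertices, connected, and no cut vertex. -/
def TwoConnected {V : Type*} [Fintype V] (G : SimpleGraph V) : Prop :=
  3 ≤ Fintype.card V ∧ G.Connected ∧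
    ∀ v : V, ((⊤ : G.Subgraph).deleteVerts {v}).coe.Connected

/-- A lollipop: a cycle `C` and a path `P` whose vertex sets meet exactly in the
vertex `a`, an endpoint of `P` lying on `C`. -/
def IsLollipop {V : Type*} {G : SimpleGraph V} {v a w : V}
    (C : G.Walk v v) (P : G.Walk a w) : Prop :=
  C.IsCycle ∧ P.IsPath ∧ a ∈ C.support ∧ ∀ u ∈ C.support, u ∈ P.support → u = a

/-- Case 1 of Dirac's proof with `ℓ = 1`: if `C` is a longest cycle (with `c` vertices),
`u ∉ V(C)` is adjacent to `v ∈ V(C)`, the lollipop `(C, v u)` is best, and all neighbors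
of `u` lie in `V(C) ∪ {u}`, then `d(u) ≤ ⌈(c-1)/2⌉`. -/

lemma cycle_tail_ne_nil {V : Type*} {G : SimpleGraph V} {v : V} (C : G.Walk v v)
    (hC : C.IsCycle) : C.support.tail ≠ [] := by
  have h3 := hC.three_le_length
  have hlen : C.support.tail.length = C.length := by
    rw [List.length_tail, C.length_support]; omega
  intro h; rw [h] at hlen; simp at hlen; omega

lemma cycle_dropLast_nodup {V : Type*} {G : SimpleGraph V} {v : V} (C : G.Walk v v)
    (hC : C.IsCycle) : C.support.dropLast.Nodup := by
  have h2 : C.support.tail.Nodup := hC.support_nodup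
  have hne := cycle_tail_ne_nil C hC
  have hlast : C.support.tail.getLast hne = v := by
    rw [List.getLast_tail, C.getLast_support]
  have h3 := List.dropLast_append_getLast hne
  rw [hlast] at h3
  have hv : v ∉ C.support.tail.dropLast := by
    have := h3 ▸ h2
    simp [List.nodup_append] at this
    exact fun h => this.2 v h rfl
  have h4 : C.support.dropLast = v :: C.support.tail.dropLast := by
    conv_lhs => rw [C.support_eq_cons]
    rw [List.dropLast_cons_of_ne_nil hne]
  rw [h4]
  exact List.nodup_cons.2 ⟨hv, h2.sublist (List.dropLast_sublist _)⟩

lemma cycle_mem_tail {V : Type*} {G : SimpleGraph V} {v x : V} (C : G.Walk v v)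
    (hC : C.IsCycle) (hx : x ∈ C.support) : x ∈ C.support.tail := by
  have hne := cycle_tail_ne_nil C hC
  have hlast : C.support.tail.getLast hne = v := by
    rw [List.getLast_tail, C.getLast_support]
  have hv : v ∈ C.support.tail := by
    have := List.getLast_mem hne; rwa [hlast] at this
  rw [C.support_eq_cons] at hx
  rcases List.mem_cons.1 hx with rfl | h
  · exact hv
  · exact h

lemma no_dart_both_adj {V : Type*} [DecidableEq V] {G : SimpleGraph V} {v u : V} (C : G.Walk v v)
    (hC : C.IsCycle)
    (hmax : ∀ (x : V) (C' : G.Walk x x), C'.IsCycle → C'.length ≤ C.length)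
    (hu : u ∉ C.support) {d : G.Dart} (hd : d ∈ C.darts)
    (h1 : G.Adj u d.fst) (h2 : G.Adj u d.snd) : False := by
  have hx : d.fst ∈ C.support := Walk.dart_fst_mem_support_of_mem_darts _ hd
  set D := C.rotate _ hx with hD
  have hDc : D.IsCycle := hC.rotate hx
  have hDlen : D.length = C.length := by
    rw [← Walk.length_darts, ← Walk.length_darts]
    exact (Walk.rotate_darts C _ hx).perm.length_eq
  obtain ⟨y, hxy, T, hT⟩ := Walk.not_nil_iff.1 hDc.not_nil
  -- first dart of D equals d, so y = d.snd
  have hd' : (⟨(d.fst, y), hxy⟩ : G.Dart) ∈ C.darts := by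
    have : (⟨(d.fst, y), hxy⟩ : G.Dart) ∈ D.darts := by
      rw [hT]; simp [Walk.darts_cons]
    exact ((Walk.rotate_darts C _ hx).perm.mem_iff).1 this
  have hnodup : (C.darts.map (·.fst)).Nodup := by
    rw [Walk.map_fst_darts]; exact cycle_dropLast_nodup C hC
  have hdd : (⟨(d.fst, y), hxy⟩ : G.Dart) = d :=
    List.inj_on_of_nodup_map hnodup hd' hd rfl
  have hy : y = d.snd := by rw [← hdd]
  subst hy
  -- u not on D
  have huD : u ∉ D.support := by
    intro h
    apply hu
    rw [D.support_eq_cons] at h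
    rcases List.mem_cons.1 h with rfl | h
    · exact hx
    · exact List.mem_of_mem_tail (((Walk.support_rotate C _ hx).mem_iff).1 h)
  have huT : u ∉ T.support := by
    intro h; exact huD (by rw [hT]; simp [h])
  -- T is a path avoiding the edge
  have hTcyc := (Walk.cons_isCycle_iff T hxy).1 (hT ▸ hDc)
  -- build the longer cycle
  set Q : G.Walk d.snd u := T.concat h1.symm with hQ
  have hQpath : Q.IsPath := by
    rw [Walk.isPath_def, hQ, Walk.support_concat]
    rw [List.nodup_append]
    exact ⟨hTcyc.1.support_nodup, List.nodup_singleton u,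
      by intro a ha b hb; simp at hb; subst hb; rintro rfl; exact huT ha⟩
  set W : G.Walk u u := Walk.cons h2 Q with hW
  have hWc : W.IsCycle := by
    rw [hW, Walk.cons_isCycle_iff]
    refine ⟨hQpath, ?_⟩
    rw [hQ, Walk.edges_concat, List.concat_eq_append, List.mem_append]
    rintro (h | h)
    · exact huT (Walk.fst_mem_support_of_mem_edges T h)
    · simp only [List.mem_singleton] at h
      rw [Sym2.eq_iff] at h
      rcases h with ⟨h, h'⟩ | ⟨h, h'⟩
      · exact G.ne_of_adj h2 h'.symm
      · exact G.ne_of_adj hxy h'.symm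
  have := hmax u W hWc
  have hWlen : W.length = C.length + 1 := by
    rw [hW, Walk.length_cons, hQ, Walk.length_concat, ← hDlen, hT, Walk.length_cons]
  omega

theorem stmt_19 {V : Type*} [Fintype V] [DecidableEq V] {G : SimpleGraph V}
    [DecidableRel G.Adj] {v u : V} (C : G.Walk v v) (hC : C.IsCycle)
    (hmax : ∀ (x : V) (C' : G.Walk x x), C'.IsCycle → C'.length ≤ C.length)
    (hu : u ∉ C.support) (hadj : G.Adj v u)
    (hbest : ∀ (v' a' w' : V) (C' : G.Walk v' v') (P' : G.Walk a' w'),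
      IsLollipop C' P' →
      ¬ (C.length < C'.length ∨
          (C'.length = C.length ∧
            (SimpleGraph.Walk.cons hadj SimpleGraph.Walk.nil : G.Walk v u).length <
              P'.length)))
    (hnbr : ∀ b : V, G.Adj u b → b ∈ C.support ∨ b = u) :
    G.degree u ≤ ((C.length - 1) + 1) / 2 := by
  classical
  set N := G.neighborFinset u with hN
  have hdeg : G.degree u = N.card := rfl
  set L := C.support.tail with hL
  have hLnodup : L.Nodup := hC.support_nodup
  have hLlen : L.length = C.length := by
    rw [hL, List.length_tail, C.length_support]; omega
  -- every neighbor has a dart ending at it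
  have hex : ∀ b ∈ N, ∃ d ∈ C.darts, d.snd = b := by
    intro b hb
    have hadj : G.Adj u b := (G.mem_neighborFinset u b).1 hb
    have hbC : b ∈ C.support := by
      rcases hnbr b hadj with h | rfl
      · exact h
      · exact absurd rfl (G.ne_of_adj hadj)
    have : b ∈ L := cycle_mem_tail C hC hbC
    rw [hL, ← Walk.map_snd_darts] at this
    obtain ⟨d, hd, hds⟩ := List.mem_map.1 this
    exact ⟨d, hd, hds⟩
  set f : V → V := fun b =>
    if h : ∃ d ∈ C.darts, d.snd = b then h.choose.fst else b with hf
  have hfval : ∀ b ∈ N, ∃ d ∈ C.darts, d.snd = b ∧ f b = d.fst := by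
    intro b hb
    have h := hex b hb
    exact ⟨h.choose, h.choose_spec.1, h.choose_spec.2, dif_pos h⟩
  have hnodupfst : (C.darts.map (·.fst)).Nodup := by
    rw [Walk.map_fst_darts]; exact cycle_dropLast_nodup C hC
  have hnodupsnd : (C.darts.map (·.snd)).Nodup := by
    rw [Walk.map_snd_darts]; exact hLnodup
  -- f maps N into L
  have hfL : ∀ b ∈ N, f b ∈ L := by
    intro b hb
    obtain ⟨d, hd, -, hfb⟩ := hfval b hb
    rw [hfb]
    exact cycle_mem_tail C hC (Walk.dart_fst_mem_support_of_mem_darts _ hd)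
  -- f maps N outside N
  have hfnotN : ∀ b ∈ N, f b ∉ N := by
    intro b hb hfb
    obtain ⟨d, hd, hds, hfbe⟩ := hfval b hb
    refine no_dart_both_adj C hC hmax hu hd ?_ ?_
    · rw [← hfbe]; exact (G.mem_neighborFinset u _).1 hfb
    · rw [hds]; exact (G.mem_neighborFinset u b).1 hb
  -- f injective on N
  have hfinj : Set.InjOn f N := by
    intro b hb b' hb' hbb
    obtain ⟨d, hd, hds, hfb⟩ := hfval b hb
    obtain ⟨d', hd', hds', hfb'⟩ := hfval b' hb'
    have : d = d' := List.inj_on_of_nodup_map hnodupfst hd hd'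
      (by rw [← hfb, ← hfb', hbb])
    rw [← hds, ← hds', this]
  have hNL : N ⊆ L.toFinset := by
    intro b hb
    have hadj : G.Adj u b := (G.mem_neighborFinset u b).1 hb
    have hbC : b ∈ C.support := by
      rcases hnbr b hadj with h | rfl
      · exact h
      · exact absurd rfl (G.ne_of_adj hadj)
    exact List.mem_toFinset.2 (cycle_mem_tail C hC hbC)
  set M := N.image f with hM
  have hML : M ⊆ L.toFinset := by
    intro a ha
    obtain ⟨b, hb, rfl⟩ := Finset.mem_image.1 ha
    exact List.mem_toFinset.2 (hfL b hb)
  have hdisj : Disjoint N M := by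
    rw [Finset.disjoint_right]
    intro a ha haN
    obtain ⟨b, hb, rfl⟩ := Finset.mem_image.1 ha
    exact hfnotN b hb haN
  have hMcard : M.card = N.card := Finset.card_image_of_injOn hfinj
  have hunion : (N ∪ M).card ≤ L.toFinset.card :=
    Finset.card_le_card (Finset.union_subset hNL hML)
  rw [Finset.card_union_of_disjoint hdisj, hMcard, List.toFinset_card_of_nodup hLnodup,
    hLlen] at hunion
  have h3 := hC.three_le_length
  omega
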